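/- An elliptic curve E over ℚ given by y² = x³ + Ax + B (with A, B ∈ ℚ) has all of its 2-torsion rational if and only if there exist u, t ∈ ℚ with A = u²·f(t) and B = u³·g(t), where f(t) = −(1/3)(t² − t + 1) and g(t) = (1/27)(−2t³ + 3t² + 3t − 2). -/

import Mathlib

open Polynomial in
private lemma expand_cubic (a b c : ℚ) :
    (X - C a) * ((X - C b) * (X - C c)) =
      X ^ 3 - C (a + b + c) * X ^ 2 + C (a * b + a * c + b * c) * X - C (a * b * c) := by
  simp only [C_add, C_mul]
  ring

open Polynomial in
theorem full_two_torsion_parametrization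
    (A B : ℚ) (hΔ : 4 * A ^ 3 + 27 * B ^ 2 ≠ 0) :
    ((X ^ 3 + C A * X + C B : ℚ[X]).map (RingHom.id ℚ)).Splits ↔
      ∃ u t : ℚ, A = u ^ 2 * (-(1 / 3) * (t ^ 2 - t + 1)) ∧
        B = u ^ 3 * ((1 / 27) * (-2 * t ^ 3 + 3 * t ^ 2 + 3 * t - 2)) := by
  have hmonic : (X ^ 3 + C A * X + C B : ℚ[X]).Monic := by monicity!
  have hdeg : (X ^ 3 + C A * X + C B : ℚ[X]).natDegree = 3 := by compute_degree!
  constructor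
  · intro hs
    rw [Polynomial.map_id] at hs
    have hcard : (X ^ 3 + C A * X + C B : ℚ[X]).roots.card = 3 := by
      rw [(splits_iff_card_roots).mp hs, hdeg]
    obtain ⟨a, b, c, habc⟩ := Multiset.card_eq_three.mp hcard
    have key := hs.eq_prod_roots_of_monic hmonic
    rw [habc] at key
    simp only [Multiset.insert_eq_cons, Multiset.map_cons, Multiset.map_singleton, Multiset.prod_cons,
      Multiset.prod_singleton] at key
    rw [expand_cubic] at key
    have h2 := congrArg (fun p => Polynomial.coeff p 2) key
    have h1 := congrArg (fun p => Polynomial.coeff p 1) key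
    have h0 := congrArg (fun p => Polynomial.coeff p 0) key
    simp only [coeff_add, coeff_sub, coeff_X_pow, coeff_C_mul, coeff_C, coeff_X] at h2 h1 h0
    norm_num at h2 h1 h0
    -- h2 : 0 = -(a+b+c) (some form), h1 : A = e2, h0 : B = -e3
    have hsum : a + b + c = 0 := by linarith
    have hA : A = a * b + a * c + b * c := h1
    have hB : B = -(a * b * c) := by linarith
    have hu : b - a ≠ 0 := by
      intro h
      apply hΔ
      have hb : b = a := by linarith
      have hc : c = -2 * a := by linarith
      rw [hA, hB, hb, hc]; ring
    have hc : c = -a - b := by linarith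
    refine ⟨b - a, (3 * c + (b - a)) / (2 * (b - a)), ?_, ?_⟩
    · rw [hA, hc]; field_simp; ring
    · rw [hB, hc]; field_simp; ring
  · rintro ⟨u, t, hA, hB⟩
    have key : (X ^ 3 + C A * X + C B : ℚ[X]) =
        (X - C (-u * (t + 1) / 3)) * ((X - C (u * (2 - t) / 3)) * (X - C (u * (2 * t - 1) / 3))) := by
      rw [expand_cubic]
      have e1 : -u * (t + 1) / 3 + u * (2 - t) / 3 + u * (2 * t - 1) / 3 = 0 := by ring
      have e2 : (-u * (t + 1) / 3) * (u * (2 - t) / 3) + (-u * (t + 1) / 3) * (u * (2 * t - 1) / 3)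
          + (u * (2 - t) / 3) * (u * (2 * t - 1) / 3) = A := by rw [hA]; ring
      have e3 : (-u * (t + 1) / 3) * (u * (2 - t) / 3) * (u * (2 * t - 1) / 3) = -B := by
        rw [hB]; ring
      rw [e1, e2, e3]
      simp only [map_zero, map_neg]
      ring
    rw [key, Polynomial.map_id]
    exact ((Splits.X_sub_C _).mul ((Splits.X_sub_C _).mul (Splits.X_sub_C _)))
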